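/- arXiv:2508.11064 — 2 statements merged into one kernel-verified Lean document; each statement's English description precedes it below -/
import Mathlib

section
/- Let $a, b > 0$ and $p > 1$. Suppose there exists $x > 0$ with $a - x + b x^p < 0$, and let $x_0$ be the smallest positive zero of $f(x) = a - x + b x^p$. Let $I \subseteq \mathbb{R}$ be an interval and $\phi : I \to [0,\infty)$ a continuous function satisfying $\phi(t) \le a + b\,\phi(t)^p$ for all $t \in I$. If $\phi(t_0) \le x_0$ for some $t_0 \in I$, then $\phi(t) \le x_0$ for all $t \in I$. -/
/-- Cazenave, Lemma 7.7.4: a bootstrap/continuity lemma. -/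
theorem stmt_0 (a b p : ℝ) (ha : 0 < a) (hb : 0 < b) (hp : 1 < p)
    (f : ℝ → ℝ) (hf : ∀ x, f x = a - x + b * x ^ p)
    (hneg : ∃ x > 0, f x < 0)
    (x₀ : ℝ) (hx₀pos : 0 < x₀) (hx₀zero : f x₀ = 0)
    (hx₀first : ∀ y, 0 < y → y < x₀ → f y ≠ 0)
    (I : Set ℝ) (hI : I.OrdConnected)
    (φ : ℝ → ℝ) (hφc : ContinuousOn φ I) (hφpos : ∀ t ∈ I, 0 ≤ φ t)
    (hφineq : ∀ t ∈ I, φ t ≤ a + b * φ t ^ p)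
    (t₀ : ℝ) (ht₀ : t₀ ∈ I) (hφt₀ : φ t₀ ≤ x₀) :
    ∀ t ∈ I, φ t ≤ x₀ := by
  have hfeq : f = fun x => a - x + b * x ^ p := funext hf
  -- continuity of f
  have hfc : Continuous f := by
    rw [hfeq]
    refine (continuous_const.sub continuous_id).add (continuous_const.mul ?_)
    exact continuous_iff_continuousAt.2 fun x =>
      Real.continuousAt_rpow_const x p (Or.inr (by linarith))
  -- f is positive on [0, x₀)
  have hpos : ∀ y, 0 ≤ y → y < x₀ → 0 < f y := by
    intro y hy0 hyx
    by_contra h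
    push_neg at h
    rcases lt_or_eq_of_le h with hlt | heq
    · have h0 : f 0 = a := by rw [hf]; simp [Real.zero_rpow (by positivity : p ≠ 0)]
      obtain ⟨z, hz, hfz⟩ := intermediate_value_Icc' hy0 hfc.continuousOn
        (show (0:ℝ) ∈ Set.Icc (f y) (f 0) by rw [h0]; exact ⟨hlt.le, ha.le⟩)
      have hz0 : 0 < z := by
        rcases hz.1.lt_or_eq with h' | h'
        · exact h'
        · exfalso; rw [← h', h0] at hfz; linarith
      exact hx₀first z hz0 (lt_of_le_of_lt hz.2 hyx) hfz
    · rcases hy0.lt_or_eq with h' | h'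
      · exact hx₀first y h' hyx heq
      · rw [← h', hf] at heq
        simp [Real.zero_rpow (by positivity : p ≠ 0)] at heq
        linarith
  obtain ⟨x₁, hx₁pos, hfx₁⟩ := hneg
  have hx₀x₁ : x₀ < x₁ := by
    rcases lt_trichotomy x₁ x₀ with h | h | h
    · exact absurd (hpos x₁ hx₁pos.le h) (by linarith)
    · rw [h, hx₀zero] at hfx₁; linarith
    · exact h
  -- convexity of f on Ici 0
  have hconv : ConvexOn ℝ (Set.Ici (0:ℝ)) f := by
    have h1 : ConvexOn ℝ (Set.Ici (0:ℝ)) (fun x : ℝ => b * x ^ p) := by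
      have := (convexOn_rpow hp.le).smul hb.le
      simpa [smul_eq_mul] using this
    have h2 : ConvexOn ℝ (Set.Ici (0:ℝ)) (fun x : ℝ => a - x) := by
      refine ⟨convex_Ici 0, ?_⟩
      intro x _ y _ s t hs ht hst
      simp only [smul_eq_mul]
      nlinarith [hst]
    rw [hfeq]
    convert h2.add h1 using 2 with x
    all_goals rfl
  -- f is negative on (x₀, x₁]
  have hneg' : ∀ y, x₀ < y → y ≤ x₁ → f y < 0 := by
    intro y hy1 hy2
    have hd : 0 < x₁ - x₀ := by linarith
    set s := (x₁ - y) / (x₁ - x₀) with hs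
    set t := (y - x₀) / (x₁ - x₀) with ht
    have hs0 : 0 ≤ s := by apply div_nonneg <;> linarith
    have ht0 : 0 < t := by apply div_pos <;> linarith
    have hst : s + t = 1 := by rw [hs, ht]; field_simp; ring
    have hcomb : s • x₀ + t • x₁ = y := by
      simp only [smul_eq_mul, hs, ht]; field_simp; ring
    have := hconv.2 (Set.mem_Ici.2 hx₀pos.le) (Set.mem_Ici.2 hx₁pos.le) hs0 ht0.le hst
    rw [hcomb] at this
    simp only [smul_eq_mul, hx₀zero, mul_zero, zero_add] at this
    nlinarith
  -- key: if t ∈ I then f (φ t) ≥ 0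
  have hkey : ∀ t ∈ I, 0 ≤ f (φ t) := by
    intro t ht
    rw [hf]
    have := hφineq t ht
    linarith
  -- main argument
  intro t ht
  by_contra h
  push_neg at h
  have hφt1 : x₁ < φ t := by
    by_contra h'
    push_neg at h'
    exact absurd (hkey t ht) (not_le.2 (hneg' (φ t) h h'))
  set c := (x₀ + x₁) / 2 with hc
  have hc1 : x₀ < c := by simp only [hc]; linarith
  have hc2 : c < x₁ := by simp only [hc]; linarith
  have hsub : Set.uIcc t₀ t ⊆ I := hI.uIcc_subset ht₀ ht
  have hmem : c ∈ Set.uIcc (φ t₀) (φ t) := by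
    rw [Set.mem_uIcc]
    left
    constructor <;> [linarith; linarith]
  obtain ⟨s, hsmem, hsc⟩ := intermediate_value_uIcc (hφc.mono hsub) hmem
  have := hkey s (hsub hsmem)
  rw [hsc] at this
  exact absurd this (not_le.2 (hneg' c hc1 hc2.le))
end

section
/- Let $\lambda, \omega, \sigma > 0$ and $\zeta = -1$. Then the equation $\omega\varphi - \lambda\varphi'' = \zeta D^\beta(|\varphi|^{2\sigma}\varphi)$ has no nontrivial solution $\varphi$ in the class of Schwartz functions: if $\varphi$ is a Schwartz solution then $\varphi \equiv 0$. -/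
open MeasureTheory

/-- Fourier multiplier with symbol `|ξ|^γ`. -/
noncomputable def Dop (γ : ℝ) (f : ℝ → ℂ) : ℝ → ℂ :=
  fun x => FourierTransformInv.fourierInv
    (fun ξ : ℝ => ((|ξ| ^ γ : ℝ) : ℂ) * FourierTransform.fourier f ξ) x

/-- squared L² norm -/
noncomputable def L2sq (f : ℝ → ℂ) : ℝ := ∫ x : ℝ, ‖f x‖ ^ 2

/-- the quantity `∫ |f|^q` (the `L^q` norm raised to the power `q`) -/
noncomputable def Lpow (q : ℝ) (f : ℝ → ℂ) : ℝ := ∫ x : ℝ, ‖f x‖ ^ q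

open Real Complex FourierTransform



lemma fourier_conj_neg (g : ℝ → ℂ) (ξ : ℝ) :
    (starRingEnd ℂ) (𝓕 g ξ) = 𝓕 (fun x => (starRingEnd ℂ) (g x)) (-ξ) := by
  rw [Real.fourier_real_eq_integral_exp_smul,
    Real.fourier_real_eq_integral_exp_smul, ← integral_conj]
  congr 1; ext v
  simp only [smul_eq_mul, map_mul, ← Complex.exp_conj, Complex.conj_I, Complex.conj_ofReal]
  congr 2
  push_cast
  ring

lemma fourier_combo {f u : ℝ → ℂ} (hf : Integrable f) (hu : Integrable u) (a b : ℂ) :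
    𝓕 (fun x => a * f x - b * u x) = fun ξ => a * 𝓕 f ξ - b * 𝓕 u ξ := by
  ext ξ
  have hfi : Integrable (fun v : ℝ => (𝐞 (-(v * ξ)) : Circle) • f v) :=
    by simpa [mul_comm] using (Real.fourierIntegral_convergent_iff ξ).2 hf
  have hui : Integrable (fun v : ℝ => (𝐞 (-(v * ξ)) : Circle) • u v) :=
    by simpa [mul_comm] using (Real.fourierIntegral_convergent_iff ξ).2 hu
  simp only [Real.fourier_real_eq]
  calc (∫ v : ℝ, (𝐞 (-(v*ξ)) : Circle) • (a * f v - b * u v))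
      = ∫ v : ℝ, (a * ((𝐞 (-(v*ξ)) : Circle) • f v) - b * ((𝐞 (-(v*ξ)) : Circle) • u v)) := by
        congr 1; ext v; simp only [Circle.smul_def, smul_eq_mul]; ring
    _ = a * (∫ v : ℝ, (𝐞 (-(v*ξ)) : Circle) • f v) - b * ∫ v : ℝ, (𝐞 (-(v*ξ)) : Circle) • u v := by
        rw [integral_sub (hfi.const_mul a) (hui.const_mul b), integral_const_mul, integral_const_mul]

lemma my_fourier_neg (f : ℝ → ℂ) (ξ : ℝ) : 𝓕 (fun x => -f x) ξ = -𝓕 f ξ := by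
  simp only [Real.fourier_real_eq, smul_neg, integral_neg]

lemma my_fourier_zero (ξ : ℝ) : 𝓕 (fun _ : ℝ => (0:ℂ)) ξ = 0 := by
  simp [Real.fourier_real_eq]

lemma my_fourierInv_zero (x : ℝ) : 𝓕⁻ (fun _ : ℝ => (0:ℂ)) x = 0 := by
  simp [Real.fourierInv_eq]


/-- In the defocusing case `ζ = -1`, the standing-wave equation
`ω φ - λ φ'' = -D^β(|φ|^(2σ) φ)` has no nontrivial Schwartz solution. -/
theorem stmt_4 (lam ω σ β : ℝ) (hlam : 0 < lam) (hω : 0 < ω) (hσ : 0 < σ)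
    (φ : SchwartzMap ℝ ℂ)
    (hφ : ∀ x : ℝ, (ω : ℂ) * φ x - (lam : ℂ) * deriv (deriv ⇑φ) x =
      -Dop β (fun y => ((‖φ y‖ ^ (2 * σ) : ℝ) : ℂ) * φ y) x) :
    ∀ x, φ x = 0 := by
  have hπ := Real.pi_pos
  set g : ℝ → ℂ := fun y => ((‖φ y‖ ^ (2 * σ) : ℝ) : ℂ) * φ y with hgdef
  set φ₂ : SchwartzMap ℝ ℂ := SchwartzMap.derivCLM ℝ ℂ (SchwartzMap.derivCLM ℝ ℂ φ) with hφ₂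
  have d1 : deriv (⇑φ) = ⇑(SchwartzMap.derivCLM ℝ ℂ φ) :=
    funext fun x => (SchwartzMap.derivCLM_apply ℝ φ x).symm
  have d2 : deriv (deriv ⇑φ) = ⇑φ₂ := by
    rw [d1]; exact funext fun x => (SchwartzMap.derivCLM_apply ℝ _ x).symm
  obtain ⟨M, hM⟩ : ∃ M : ℝ, ∀ x, ‖φ x‖ ≤ M := by
    obtain ⟨C, hC⟩ := φ.decay 0 0
    exact ⟨C, fun x => by simpa using hC.2 x⟩
  have hM0 : (0:ℝ) ≤ M := le_trans (norm_nonneg _) (hM 0)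
  have hrcont : Continuous fun y => (‖φ y‖ ^ (2 * σ) : ℝ) := by
    apply continuous_iff_continuousAt.2
    intro x
    exact (Real.continuousAt_rpow_const _ _ (Or.inr (by positivity))).comp
      (continuous_norm.comp φ.continuous).continuousAt
  have gcont : Continuous g := (Complex.continuous_ofReal.comp hrcont).mul φ.continuous
  have gbound : ∀ y, ‖g y‖ ≤ M ^ (2 * σ) * ‖φ y‖ := by
    intro y
    have h1 : ‖((‖φ y‖ ^ (2*σ):ℝ):ℂ)‖ = ‖φ y‖ ^ (2*σ) := by
      rw [Complex.norm_real, Real.norm_eq_abs,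
        _root_.abs_of_nonneg (Real.rpow_nonneg (norm_nonneg _) _)]
    calc ‖g y‖ = ‖φ y‖ ^ (2*σ) * ‖φ y‖ := by rw [hgdef, norm_mul, h1]
      _ ≤ M ^ (2*σ) * ‖φ y‖ := by
          apply mul_le_mul_of_nonneg_right _ (norm_nonneg _)
          exact Real.rpow_le_rpow (norm_nonneg _)
            (hM y) (by positivity)
  have gint : Integrable g := by
    refine Integrable.mono' ((φ.integrable.norm).const_mul (M ^ (2*σ)))
      gcont.aestronglyMeasurable ?_
    exact Filter.Eventually.of_forall gbound
  -- Fourier transforms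
  set F : ℝ → ℂ := 𝓕 ⇑φ with hFdef
  set G : ℝ → ℂ := 𝓕 g with hGdef
  set h : ℝ → ℂ := fun ξ => ((|ξ| ^ β : ℝ) : ℂ) * G ξ with hhdef
  have hDop : Dop β g = 𝓕⁻ h := rfl
  have hFint : Integrable F := by
    have : F = ⇑(SchwartzMap.fourierTransformCLM ℂ φ) := by
      exact (SchwartzMap.fourier_coe φ).symm
    rw [this]; exact (SchwartzMap.fourierTransformCLM ℂ φ).integrable
  have hFinvint : Integrable (𝓕⁻ ⇑φ) := by
    have : 𝓕⁻ ⇑φ = ⇑(𝓕⁻ φ : SchwartzMap ℝ ℂ) := (SchwartzMap.fourierInv_coe φ).symm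
    rw [this]; exact (𝓕⁻ φ : SchwartzMap ℝ ℂ).integrable
  have ψint : Integrable (fun x => (ω : ℂ) * φ x - (lam : ℂ) * deriv (deriv ⇑φ) x) := by
    apply Integrable.sub (φ.integrable.const_mul _)
    rw [d2]; exact φ₂.integrable.const_mul _
  have fact1 : ∀ ξ : ℝ, 𝓕 (fun x => (ω : ℂ) * φ x - (lam : ℂ) * deriv (deriv ⇑φ) x) ξ
      = ((ω + lam * (4 * π ^ 2 * ξ ^ 2) : ℝ) : ℂ) * F ξ := by
    have hd1' : 𝓕 (deriv ⇑φ) = fun ξ : ℝ => (2 * π * Complex.I * ξ) • F ξ :=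
      Real.fourier_deriv φ.integrable φ.differentiable
        (by rw [d1]; exact (SchwartzMap.derivCLM ℝ ℂ φ).integrable)
    have hd2' : 𝓕 (deriv (deriv ⇑φ)) = fun ξ : ℝ => (2 * π * Complex.I * ξ) • 𝓕 (deriv ⇑φ) ξ :=
      Real.fourier_deriv (by rw [d1]; exact (SchwartzMap.derivCLM ℝ ℂ φ).integrable)
        (by rw [d1]; exact (SchwartzMap.derivCLM ℝ ℂ φ).differentiable)
        (by rw [d2]; exact φ₂.integrable)
    intro ξ
    rw [fourier_combo φ.integrable (by rw [d2]; exact φ₂.integrable) _ _]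
    rw [hd2', hd1']
    simp only [smul_eq_mul]
    push_cast
    linear_combination (-(lam:ℂ) * 4 * (π:ℂ)^2 * (ξ:ℂ)^2 * F ξ) * Complex.I_sq
  by_cases hint : Integrable h
  case neg =>
    have hinv0 : ∀ x, 𝓕⁻ h x = 0 := by
      intro x
      rw [Real.fourierInv_eq_fourier_neg, Real.fourier_real_eq]
      apply integral_undef
      intro hc
      exact hint ((Real.fourierIntegral_convergent_iff (-x)).1 (by simpa [mul_comm] using hc))
    have hψ0 : ∀ x : ℝ, (ω:ℂ) * φ x - (lam:ℂ) * deriv (deriv ⇑φ) x = 0 := by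
      intro x; rw [hφ x, hDop, hinv0 x, neg_zero]
    have hF0' : 𝓕 ⇑φ = fun _ : ℝ => (0:ℂ) := by
      funext ξ
      have h1 := fact1 ξ
      rw [show (fun x => (ω:ℂ) * φ x - (lam:ℂ) * deriv (deriv ⇑φ) x) = fun _ : ℝ => (0:ℂ)
        from funext hψ0, my_fourier_zero] at h1
      have hc : ((ω + lam * (4 * π^2 * ξ^2) : ℝ) : ℂ) ≠ 0 := by
        rw [Ne, Complex.ofReal_eq_zero]; positivity
      exact (mul_eq_zero.1 h1.symm).resolve_left hc
    intro x
    have hinv := φ.integrable.fourierInv_fourier_eq hFint φ.continuous.continuousAt (v := x)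
    rw [← hinv, hF0', my_fourierInv_zero]
  case pos =>
    have hψinv : 𝓕⁻ h = fun x => -((ω:ℂ) * φ x - (lam:ℂ) * deriv (deriv ⇑φ) x) := by
      funext x; rw [hφ x, hDop, neg_neg]
    have hinvint : Integrable (𝓕⁻ h) := by rw [hψinv]; exact ψint.neg
    have hFh_int : Integrable (𝓕 h) := by
      have e : 𝓕 h = fun ξ => 𝓕⁻ h (-ξ) := by
        funext ξ; rw [Real.fourierInv_eq_fourier_neg, neg_neg]
      rw [e, hψinv]; exact ψint.neg.comp_neg
    have Gcont : Continuous G := VectorFourier.fourierIntegral_continuous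
      Real.continuous_fourierChar (by exact continuous_inner) gint
    have key : ∀ ξ : ℝ, ξ ≠ 0 → ((ω + lam * (4*π^2*ξ^2) : ℝ) : ℂ) * F ξ = -h ξ := by
      intro ξ hξ
      rw [← fact1 ξ]
      have hcont : ContinuousAt h ξ := by
        apply ContinuousAt.mul _ Gcont.continuousAt
        exact Complex.continuous_ofReal.continuousAt.comp
          ((Real.continuousAt_rpow_const _ _ (Or.inl (abs_ne_zero.2 hξ))).comp
            continuous_abs.continuousAt)
      have hinv := hint.fourier_fourierInv_eq hFh_int hcont
      have e2 : (fun x => (ω:ℂ) * φ x - (lam:ℂ) * deriv (deriv ⇑φ) x)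
          = fun x => -(𝓕⁻ h x) := by
        funext x; rw [hψinv]; simp
      rw [e2, my_fourier_neg, hinv]
    set q : ℝ → ℝ := fun ξ => -(|ξ| ^ β * Complex.normSq (G ξ)) / (ω + lam * (4*π^2*ξ^2))
      with hqdef
    have hq0 : ∀ ξ, q ξ ≤ 0 := by
      intro ξ
      apply div_nonpos_of_nonpos_of_nonneg
      · simp only [neg_nonpos]
        exact mul_nonneg (Real.rpow_nonneg (abs_nonneg _) _) (Complex.normSq_nonneg _)
      · positivity
    have h0ae : ∀ᵐ ξ : ℝ, ξ ≠ 0 := by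
      refine (ae_iff).2 ?_
      simp [not_not, Set.setOf_eq_eq_singleton, measure_singleton]
    have hae : ∀ᵐ ξ : ℝ, F ξ * (starRingEnd ℂ) (G ξ) = ((q ξ : ℝ) : ℂ) := by
      filter_upwards [h0ae] with ξ hξ
      have hc : (0:ℝ) < ω + lam * (4*π^2*ξ^2) := by positivity
      have hcne : ((ω + lam * (4*π^2*ξ^2) : ℝ) : ℂ) ≠ 0 := Complex.ofReal_ne_zero.2 hc.ne'
      apply mul_left_cancel₀ hcne
      rw [← mul_assoc, key ξ hξ]
      have e3 : -h ξ * (starRingEnd ℂ) (G ξ)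
          = ((-(|ξ| ^ β * Complex.normSq (G ξ)) : ℝ) : ℂ) := by
        simp only [hhdef]
        rw [neg_mul, mul_assoc, Complex.mul_conj]
        push_cast; ring
      rw [e3, ← Complex.ofReal_mul, Complex.ofReal_inj, hqdef]
      field_simp
    have hcg : Integrable fun x => (starRingEnd ℂ) (g x) := by
      refine Integrable.mono' gint.norm
        ((Complex.continuous_conj.comp gcont).aestronglyMeasurable) ?_
      exact Filter.Eventually.of_forall fun x => by simp
    have parseval : (∫ ξ : ℝ, F ξ * (starRingEnd ℂ) (G ξ))
        = ∫ x : ℝ, (starRingEnd ℂ) (g x) * φ x := by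
      rw [hFdef, hGdef]
      calc (∫ ξ : ℝ, 𝓕 ⇑φ ξ * (starRingEnd ℂ) (𝓕 g ξ))
          = ∫ ξ : ℝ, 𝓕 ⇑φ ξ * 𝓕 (fun x => (starRingEnd ℂ) (g x)) (-ξ) := by
            congr 1; funext ξ; rw [fourier_conj_neg g ξ]
        _ = ∫ ξ : ℝ, 𝓕 ⇑φ (-ξ) * 𝓕 (fun x => (starRingEnd ℂ) (g x)) ξ := by
            have := integral_neg_eq_self
              (fun ξ : ℝ => 𝓕 ⇑φ ξ * 𝓕 (fun x => (starRingEnd ℂ) (g x)) (-ξ)) volume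
            simpa [neg_neg] using this.symm
        _ = ∫ ξ : ℝ, 𝓕 (fun x => (starRingEnd ℂ) (g x)) ξ • (𝓕⁻ ⇑φ) ξ := by
            congr 1; funext ξ
            rw [smul_eq_mul, mul_comm, Real.fourierInv_eq_fourier_neg]
        _ = ∫ x : ℝ, (starRingEnd ℂ) (g x) • 𝓕 (𝓕⁻ ⇑φ) x := by
            simpa [flip_innerₗ] using! VectorFourier.integral_fourierIntegral_smul_eq_flip
              (L := innerₗ ℝ) Real.continuous_fourierChar continuous_inner hcg hFinvint
        _ = ∫ x : ℝ, (starRingEnd ℂ) (g x) * φ x := by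
            rw [Continuous.fourier_fourierInv_eq φ.continuous φ.integrable hFint]
            simp [smul_eq_mul]
    have hR : (∫ x : ℝ, (starRingEnd ℂ) (g x) * φ x)
        = ((∫ x : ℝ, ‖φ x‖ ^ (2*σ) * Complex.normSq (φ x) : ℝ) : ℂ) := by
      have e5 : (∫ x : ℝ, (starRingEnd ℂ) (g x) * φ x)
          = ∫ x : ℝ, ((‖φ x‖ ^ (2*σ) * Complex.normSq (φ x) : ℝ) : ℂ) := by
        congr 1; funext x
        simp only [hgdef]
        rw [map_mul, Complex.conj_ofReal]
        calc ((‖φ x‖ ^ (2*σ) : ℝ) : ℂ) * (starRingEnd ℂ) (φ x) * φ x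
            = ((‖φ x‖ ^ (2*σ) : ℝ) : ℂ) * (φ x * (starRingEnd ℂ) (φ x)) := by ring
          _ = ((‖φ x‖ ^ (2*σ) : ℝ) : ℂ) * ((Complex.normSq (φ x) : ℝ) : ℂ) := by
              rw [Complex.mul_conj]
          _ = (((‖φ x‖ ^ (2*σ)) * Complex.normSq (φ x) : ℝ) : ℂ) := by
              push_cast; ring
      rw [e5]; exact integral_ofReal
    have hQ : (∫ ξ : ℝ, F ξ * (starRingEnd ℂ) (G ξ)) = ((∫ ξ : ℝ, q ξ : ℝ) : ℂ) := by
      rw [integral_congr_ae hae]; exact integral_ofReal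
    have hAB : (∫ x : ℝ, ‖φ x‖ ^ (2*σ) * Complex.normSq (φ x)) = ∫ ξ : ℝ, q ξ := by
      have := (hQ.symm.trans parseval).trans hR
      exact (Complex.ofReal_inj.1 this).symm
    have hA_nonneg : 0 ≤ ∫ x : ℝ, ‖φ x‖ ^ (2*σ) * Complex.normSq (φ x) :=
      integral_nonneg fun x =>
        mul_nonneg (Real.rpow_nonneg (norm_nonneg _) _) (Complex.normSq_nonneg _)
    have hq_nonpos : (∫ ξ : ℝ, q ξ) ≤ 0 := integral_nonpos fun ξ => hq0 ξ
    have hA0 : (∫ x : ℝ, ‖φ x‖ ^ (2*σ) * Complex.normSq (φ x)) = 0 :=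
      le_antisymm (hAB ▸ hq_nonpos) hA_nonneg
    have hAint : Integrable (fun x => ‖φ x‖ ^ (2*σ) * Complex.normSq (φ x)) := by
      refine Integrable.mono' ((φ.integrable.norm).const_mul (M ^ (2*σ) * M))
        ((hrcont.mul (Complex.continuous_normSq.comp φ.continuous)).aestronglyMeasurable) ?_
      refine Filter.Eventually.of_forall fun x => ?_
      rw [Real.norm_eq_abs, _root_.abs_of_nonneg
        (mul_nonneg (Real.rpow_nonneg (norm_nonneg _) _) (Complex.normSq_nonneg _))]
      have e4 : Complex.normSq (φ x) = ‖φ x‖ * ‖φ x‖ := by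
        rw [Complex.normSq_eq_norm_sq]; ring
      rw [e4, mul_assoc]
      apply mul_le_mul
      · exact Real.rpow_le_rpow (norm_nonneg _)
          (hM x) (by positivity)
      · exact mul_le_mul_of_nonneg_right (hM x) (norm_nonneg _)
      · positivity
      · positivity
    have hAeq : (fun x => ‖φ x‖ ^ (2*σ) * Complex.normSq (φ x))
        = fun _ => (0:ℝ) := by
      refine (Continuous.ae_eq_iff_eq (μ := volume)
        (hrcont.mul (Complex.continuous_normSq.comp φ.continuous)) continuous_const).1 ?_
      exact (integral_eq_zero_iff_of_nonneg (fun x =>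
        mul_nonneg (Real.rpow_nonneg (norm_nonneg _) _) (Complex.normSq_nonneg _))
        hAint).1 hA0
    intro x
    by_contra hx
    have h1 : 0 < ‖φ x‖ := norm_pos_iff.2 hx
    have h2 : 0 < ‖φ x‖ ^ (2*σ) * Complex.normSq (φ x) :=
      mul_pos (Real.rpow_pos_of_pos h1 _) (Complex.normSq_pos.2 hx)
    have h3 := congrFun hAeq x
    linarith
end
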